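/- arXiv:math/0609420 — 3 statements merged into one kernel-verified Lean document; each statement's English description precedes it below -/
import Mathlib

section
/- Let X be a simplicial set satisfying Kan(m,j) for all m ≥ 1 and 0 ≤ j ≤ m, and Kan!(m,j) for all m ≥ 3 and 0 ≤ j ≤ m (a 2-groupoid). Then the bigons of X form a groupoid with set of objects X₁, in which: for x, y ∈ X₁ the morphisms from x to y are the 2-simplices η ∈ X₂ with d₁η = x, d₀η = y and d₂η = s₀(d₁x); the identity at x is the degenerate 2-simplex s₀x; and the composite of η₂ : x → x' followed by η₀ : x' → x'' is d₁θ, where θ is the unique 3-simplex of X with d₀θ = η₀, d₂θ = η₂ and d₃θ = s₀(s₀(d₁x)). In particular such a θ exists and is unique, d₁θ is again a morphism from x to x'', this composition is associative, s₀x is a two-sided unit, and every such morphism has a two-sided inverse. -/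
open CategoryTheory Simplicial

/-- `Kan(m,j)`: every map from the horn `Λ[m,j]` to `X` extends along the horn
inclusion to a map `Δ[m] ⟶ X`. -/
def SSet.KanCond (X : SSet.{u}) (m : ℕ) (j : Fin (m + 1)) : Prop :=
  ∀ σ₀ : (Λ[m, j] : SSet) ⟶ X, ∃ σ : Δ[m] ⟶ X, σ₀ = Λ[m, j].ι ≫ σ

/-- `Kan!(m,j)`: every map from the horn `Λ[m,j]` to `X` extends *uniquely* along the
horn inclusion to a map `Δ[m] ⟶ X`. -/
def SSet.KanCondUnique (X : SSet.{u}) (m : ℕ) (j : Fin (m + 1)) : Prop :=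
  ∀ σ₀ : (Λ[m, j] : SSet) ⟶ X, ∃! σ : Δ[m] ⟶ X, σ₀ = Λ[m, j].ι ≫ σ

/-- `η` is a bigon of `X` regarded as a morphism from the 1-simplex `x` to the
1-simplex `y`: its `d₁`-face is `x`, its `d₀`-face is `y`, and its `d₂`-face is the
degenerate edge at the source vertex of `x`. -/
def SSet.IsBigonFrom (X : SSet.{u}) (x y : X _⦋1⦌) (η : X _⦋2⦌) : Prop :=
  X.δ 1 η = x ∧ X.δ 0 η = y ∧ X.δ 2 η = X.σ 0 (X.δ 1 x)

/-- `η` is the composite of the bigon `η₂` followed by the bigon `η₀`: there is a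
3-simplex `θ` with `d₀ θ = η₀`, `d₂ θ = η₂`, `d₃ θ` the doubly degenerate 2-simplex
at the source vertex of the source 1-simplex of `η₂`, and `d₁ θ = η`. -/
def SSet.IsBigonComp (X : SSet.{u}) (η₂ η₀ η : X _⦋2⦌) : Prop :=
  ∃ θ : X _⦋3⦌, X.δ 0 θ = η₀ ∧ X.δ 2 θ = η₂ ∧
    X.δ 3 θ = X.σ 0 (X.σ 0 (X.δ 1 (X.δ 1 η₂))) ∧ X.δ 1 θ = η

namespace BigonAux
open SimplexCategory Opposite SSet

universe u
variable {X : SSet.{u}}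

lemma map_op_apply₂ (X : SSet.{u}) {k l m : SimplexCategory} (u : k ⟶ l) (v : l ⟶ m)
    (a : X.obj (op m)) : X.map u.op (X.map v.op a) = X.map (u ≫ v).op a := by
  rw [op_comp, FunctorToTypes.map_comp_apply]

lemma δ_def (X : SSet.{u}) {m : ℕ} (i : Fin (m + 2)) (x : X _⦋m + 1⦌) :
    X.map (SimplexCategory.δ i).op x = X.δ i x := rfl

/-- element-level first simplicial identity with flexible indices -/
lemma dd (X : SSet.{u}) {n : ℕ} (i j : Fin (n + 2)) (k l : Fin (n + 3))
    (hk : k = j.succ) (hl : l = i.castSucc) (H : i ≤ j) (a : X _⦋n + 2⦌) :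
    X.δ i (X.δ k a) = X.δ j (X.δ l a) := by
  subst hk hl; exact ConcreteCategory.congr_hom (X.δ_comp_δ H) a

lemma ds_self (X : SSet.{u}) {n : ℕ} (j : Fin (n + 2)) (i : Fin (n + 1))
    (H : j = i.castSucc) (a : X _⦋n⦌) : X.δ j (X.σ i a) = a :=
  ConcreteCategory.congr_hom (X.δ_comp_σ_self' H) a

lemma ds_succ (X : SSet.{u}) {n : ℕ} (j : Fin (n + 2)) (i : Fin (n + 1))
    (H : j = i.succ) (a : X _⦋n⦌) : X.δ j (X.σ i a) = a :=
  ConcreteCategory.congr_hom (X.δ_comp_σ_succ' H) a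

lemma ds_le (X : SSet.{u}) {n : ℕ} (i : Fin (n + 2)) (j : Fin (n + 1))
    (k : Fin (n + 3)) (l : Fin (n + 2)) (hk : k = i.castSucc) (hl : l = j.succ)
    (H : i ≤ j.castSucc) (a : X _⦋n + 1⦌) :
    X.δ k (X.σ l a) = X.σ j (X.δ i a) := by
  subst hk hl; exact ConcreteCategory.congr_hom (X.δ_comp_σ_of_le H) a

lemma ds_gt (X : SSet.{u}) {n : ℕ} (i : Fin (n + 2)) (j : Fin (n + 1))
    (k : Fin (n + 3)) (l : Fin (n + 2)) (hk : k = i.succ) (hl : l = j.castSucc)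
    (H : j.castSucc < i) (a : X _⦋n + 1⦌) :
    X.δ k (X.σ l a) = X.σ j (X.δ i a) := by
  subst hk hl; exact ConcreteCategory.congr_hom (X.δ_comp_σ_of_gt H) a

lemma ss (X : SSet.{u}) {n : ℕ} (i j : Fin (n + 1)) (k l : Fin (n + 2))
    (hk : k = i.castSucc) (hl : l = j.succ) (H : i ≤ j) (a : X _⦋n⦌) :
    X.σ k (X.σ j a) = X.σ l (X.σ i a) := by
  subst hk hl; exact ConcreteCategory.congr_hom (X.σ_comp_σ H) a

section Horn

variable {n : ℕ} {i : Fin (n + 3)}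

/-- `factor_δ` for arbitrary domain -/
def fac {a : SimplexCategory} {m : ℕ} (f : a ⟶ ⦋m + 1⦌) (j : Fin (m + 2)) : a ⟶ ⦋m⦌ :=
  f ≫ SimplexCategory.σ (Fin.predAbove 0 j)

lemma fac_spec {a : SimplexCategory} {m : ℕ} (f : a ⟶ ⦋m + 1⦌) (j : Fin (m + 2))
    (hj : ∀ k, f.toOrderHom k ≠ j) : fac f j ≫ SimplexCategory.δ j = f := by
  induction a using SimplexCategory.rec with
  | _ m' => exact factor_δ_spec f j hj

lemma fac_comp {a b : SimplexCategory} {m : ℕ} (g : a ⟶ b) (f : b ⟶ ⦋m + 1⦌)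
    (j : Fin (m + 2)) : fac (g ≫ f) j = g ≫ fac f j :=
  Category.assoc _ _ _

lemma fac_apply {a : SimplexCategory} {m : ℕ} (f : a ⟶ ⦋m + 1⦌) (j : Fin (m + 2))
    (hj : ∀ k, f.toOrderHom k ≠ j) (t : Fin (a.len + 1)) :
    j.succAbove ((fac f j).toOrderHom t) = f.toOrderHom t :=
  congrArg (fun q => q.toOrderHom t) (fac_spec f j hj)

variable (y : ∀ j : Fin (n + 3), j ≠ i → X _⦋n + 1⦌)

/-- compatibility of a face family -/
def Cmp (y : ∀ j : Fin (n + 3), j ≠ i → X _⦋n + 1⦌) : Prop :=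
  ∀ (j k : Fin (n + 2)), j ≤ k → ∀ (hj : j.castSucc ≠ i) (hk : k.succ ≠ i),
    X.δ j (y k.succ hk) = X.δ k (y j.castSucc hj)

lemma welldef_lt (hcmp : Cmp y) {a : SimplexCategory} (f : a ⟶ ⦋n + 2⦌) (j0 k0 : Fin (n + 2))
    (hjk : j0 ≤ k0) (hj : j0.castSucc ≠ i) (hk : k0.succ ≠ i)
    (hjf : ∀ t, f.toOrderHom t ≠ j0.castSucc) (hkf : ∀ t, f.toOrderHom t ≠ k0.succ) :
    X.map (fac f j0.castSucc).op (y _ hj) = X.map (fac f k0.succ).op (y _ hk) := by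
  have hg : ∀ t, (fac f j0.castSucc).toOrderHom t ≠ k0 := by
    intro t h
    apply hkf t
    rw [← fac_apply f j0.castSucc hjf t, h,
      Fin.succAbove_of_le_castSucc _ _ (by simpa using hjk)]
  have hh : ∀ t, (fac f k0.succ).toOrderHom t ≠ j0 := by
    intro t h
    apply hjf t
    rw [← fac_apply f k0.succ hkf t, h,
      Fin.succAbove_of_castSucc_lt _ _ (by simp [Fin.castSucc_lt_succ_iff, hjk])]
  set A := fac (fac f j0.castSucc) k0 with hA
  set B := fac (fac f k0.succ) j0 with hB
  have hAB : A = B := by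
    have e1 : (A ≫ SimplexCategory.δ j0) ≫ SimplexCategory.δ k0.succ = f := by
      rw [Category.assoc, SimplexCategory.δ_comp_δ hjk, ← Category.assoc,
        fac_spec _ _ hg, fac_spec _ _ hjf]
    have e2 : (B ≫ SimplexCategory.δ j0) ≫ SimplexCategory.δ k0.succ = f := by
      rw [Category.assoc, ← Category.assoc, fac_spec _ _ hh, fac_spec _ _ hkf]
    have := e1.trans e2.symm
    rw [cancel_mono, cancel_mono] at this
    exact this
  calc X.map (fac f j0.castSucc).op (y _ hj)
      = X.map (A ≫ SimplexCategory.δ k0).op (y _ hj) := by rw [fac_spec _ _ hg]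
    _ = X.map A.op (X.δ k0 (y _ hj)) := by
        rw [← map_op_apply₂]; rfl
    _ = X.map B.op (X.δ j0 (y _ hk)) := by rw [hAB, ← hcmp j0 k0 hjk hj hk]
    _ = X.map (B ≫ SimplexCategory.δ j0).op (y _ hk) := by
        rw [← map_op_apply₂]; rfl
    _ = X.map (fac f k0.succ).op (y _ hk) := by rw [fac_spec _ _ hh]

lemma welldef (hcmp : Cmp y) {a : SimplexCategory} (f : a ⟶ ⦋n + 2⦌) (j k : Fin (n + 3))
    (hj : j ≠ i) (hk : k ≠ i)
    (hjf : ∀ t, f.toOrderHom t ≠ j) (hkf : ∀ t, f.toOrderHom t ≠ k) :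
    X.map (fac f j).op (y j hj) = X.map (fac f k).op (y k hk) := by
  rcases lt_trichotomy j k with h | h | h
  · obtain ⟨j0, rfl⟩ := Fin.exists_castSucc_eq.mpr (Fin.ne_last_of_lt h)
    obtain ⟨k0, rfl⟩ := Fin.exists_succ_eq.mpr (Fin.ne_zero_of_lt h)
    exact welldef_lt y hcmp f j0 k0 (by simpa [Fin.castSucc_lt_succ_iff] using h)
      hj hk hjf hkf
  · subst h; rfl
  · obtain ⟨k0, rfl⟩ := Fin.exists_castSucc_eq.mpr (Fin.ne_last_of_lt h)
    obtain ⟨j0, rfl⟩ := Fin.exists_succ_eq.mpr (Fin.ne_zero_of_lt h)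
    exact (welldef_lt y hcmp f k0 j0 (by simpa [Fin.castSucc_lt_succ_iff] using h)
      hk hj hkf hjf).symm

lemma exists_missing {m : SimplexCategoryᵒᵖ} (α : (Λ[n + 2, i] : SSet).obj m) :
    ∃ j, j ≠ i ∧ ∀ t, α.1.down.toOrderHom t ≠ j := by
  obtain ⟨j, hj⟩ := (Set.ne_univ_iff_exists_notMem _).mp α.2
  simp only [Set.mem_union, Set.mem_range, Set.mem_singleton_iff, not_or, not_exists] at hj
  exact ⟨j, hj.2, fun t ht => hj.1 t ht⟩

/-- Build a map from the horn out of compatible faces. -/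
noncomputable def hornMk (hcmp : Cmp y) : (Λ[n + 2, i] : SSet) ⟶ X where
  app m := TypeCat.ofHom fun α => X.map (fac α.1.down (exists_missing α).choose).op
    (y _ (exists_missing α).choose_spec.1)
  naturality m m' φ := by
    ext α
    set α' := (Λ[n + 2, i] : SSet).map φ α with hα'
    have hd : α'.1.down = φ.unop ≫ α.1.down := rfl
    set j := (exists_missing α).choose with hj
    have hji := (exists_missing α).choose_spec.1
    have hjm := (exists_missing α).choose_spec.2
    have hjm' : ∀ t, α'.1.down.toOrderHom t ≠ j := by
      intro t; rw [hd]; exact hjm _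
    show X.map (fac α'.1.down (exists_missing α').choose).op _ = _
    rw [welldef y hcmp α'.1.down (exists_missing α').choose j
      (exists_missing α').choose_spec.1 hji (exists_missing α').choose_spec.2 hjm']
    rw [hd, fac_comp]
    have : (φ.unop ≫ fac α.1.down j).op = (fac α.1.down j).op ≫ φ := rfl
    rw [this, FunctorToTypes.map_comp_apply]
    rfl

lemma hornMk_face (hcmp : Cmp y) (j : Fin (n + 3)) (hj : j ≠ i) :
    (hornMk y hcmp).app _ (SSet.horn.face i j hj) = y j hj := by
  set α := SSet.horn.face i j hj with hα
  have hd : α.1.down = SimplexCategory.δ j := rfl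
  have hjm : ∀ t, α.1.down.toOrderHom t ≠ j := by
    intro t; rw [hd]; exact Fin.succAbove_ne j t
  show X.map (fac α.1.down (exists_missing α).choose).op _ = _
  rw [welldef y hcmp α.1.down (exists_missing α).choose j
    (exists_missing α).choose_spec.1 hj (exists_missing α).choose_spec.2 hjm]
  have hid : fac α.1.down j = 𝟙 (⦋n + 1⦌ : SimplexCategory) := by
    have := fac_spec α.1.down j hjm
    rw [hd] at this ⊢
    rw [← cancel_mono (SimplexCategory.δ j), this, Category.id_comp]
  rw [hid]
  simp

/-- The horn-filling: given compatible faces, get a simplex with those faces. -/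
lemma fill (hcmp : Cmp y) (hK : X.KanCond (n + 2) i) :
    ∃ z : X _⦋n + 2⦌, ∀ j hj, X.δ j z = y j hj := by
  obtain ⟨σf, hσ⟩ := hK (hornMk y hcmp)
  refine ⟨σf.app (op ⦋n + 2⦌) (SSet.yonedaEquiv (𝟙 Δ[n + 2])), fun j hj => ?_⟩
  have h1 : X.δ j (σf.app (op ⦋n + 2⦌) (SSet.yonedaEquiv (𝟙 Δ[n + 2])))
      = σf.app (op ⦋n + 1⦌) (Δ[n + 2].map (SimplexCategory.δ j).op (SSet.yonedaEquiv (𝟙 Δ[n + 2]))) :=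
    (ConcreteCategory.congr_hom (σf.naturality (SimplexCategory.δ j).op) _).symm
  have h2 : Δ[n + 2].map (SimplexCategory.δ j).op (SSet.yonedaEquiv (𝟙 Δ[n + 2]))
      = (Λ[n + 2, i].ι).app _ (SSet.horn.face i j hj) := by
    apply ULift.ext
    show SimplexCategory.δ j ≫ 𝟙 _ = _
    rw [Category.comp_id]; rfl
  rw [h1, h2, ← hornMk_face y hcmp j hj, hσ]
  rfl

/-- Uniqueness of fillers: two simplices with the same faces (away from `i`) agree. -/
lemma unique_of_faces (hK : X.KanCondUnique (n + 2) i) {z z' : X _⦋n + 2⦌}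
    (e : ∀ j (_ : j ≠ i), X.δ j z = X.δ j z') : z = z' := by
  set sz := (SSet.yonedaEquiv (X := X) (n := ⦋n + 2⦌)).symm z with hsz
  set sz' := (SSet.yonedaEquiv (X := X) (n := ⦋n + 2⦌)).symm z' with hsz'
  have key : ∀ (w : X _⦋n + 2⦌) (j : Fin (n + 3)) (hj : j ≠ i),
      (Λ[n + 2, i].ι ≫ (SSet.yonedaEquiv (X := X) (n := ⦋n + 2⦌)).symm w).app _
        (SSet.horn.face i j hj) = X.δ j w := fun w j hj => rfl
  have heq : Λ[n + 2, i].ι ≫ sz = Λ[n + 2, i].ι ≫ sz' := by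
    apply SSet.horn.hom_ext
    intro j hj
    rw [key z j hj, key z' j hj] -- may need adjusting
    exact e j hj
  obtain ⟨w, -, hu⟩ := hK (Λ[n + 2, i].ι ≫ sz)
  have h1 : sz = w := hu sz rfl
  have h2 : sz' = w := hu sz' heq
  have : sz = sz' := h1.trans h2.symm
  exact (SSet.yonedaEquiv (X := X) (n := ⦋n + 2⦌)).symm.injective this

end Horn
end BigonAux

namespace BigonAux
open SimplexCategory Opposite SSet

universe u
variable {X : SSet.{u}}

lemma src_eq {x y : X _⦋1⦌} {f : X _⦋2⦌} (hf : X.IsBigonFrom x y f) :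
    X.δ 1 y = X.δ 1 x := by
  obtain ⟨h1, h0, h2⟩ := hf
  rw [← h0, ← dd X 0 1 2 0 (by decide) (by decide) (by decide) f, h2,
    ds_self X 0 0 (by decide)]

lemma closure {x x' x'' : X _⦋1⦌} {η₂ η₀ : X _⦋2⦌}
    (hη₂ : X.IsBigonFrom x x' η₂) (hη₀ : X.IsBigonFrom x' x'' η₀) (θ : X _⦋3⦌)
    (t0 : X.δ 0 θ = η₀) (t2 : X.δ 2 θ = η₂)
    (t3 : X.δ 3 θ = X.σ 0 (X.σ 0 (X.δ 1 x))) :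
    X.IsBigonFrom x x'' (X.δ 1 θ) := by
  refine ⟨?_, ?_, ?_⟩
  · rw [← dd X 1 1 2 1 (by decide) (by decide) (by decide) θ, t2, hη₂.1]
  · rw [dd X 0 0 1 0 (by decide) (by decide) (by decide) θ, t0, hη₀.2.1]
  · rw [← dd X 1 2 3 1 (by decide) (by decide) (by decide) θ, t3,
      ds_succ X 1 0 (by decide)]

lemma compose_exists (hK : X.KanCond 3 1) {x x' x'' : X _⦋1⦌} {η₂ η₀ : X _⦋2⦌}
    (hη₂ : X.IsBigonFrom x x' η₂) (hη₀ : X.IsBigonFrom x' x'' η₀) :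
    ∃ θ : X _⦋3⦌, X.δ 0 θ = η₀ ∧ X.δ 2 θ = η₂ ∧
      X.δ 3 θ = X.σ 0 (X.σ 0 (X.δ 1 x)) := by
  set Y : ∀ j : Fin 4, j ≠ (1 : Fin 4) → X _⦋2⦌ :=
    fun j _ => ![η₀, η₀, η₂, X.σ 0 (X.σ 0 (X.δ 1 x))] j with hY
  have hcmp : Cmp (i := (1 : Fin 4)) Y := by
    intro j k hjk hj hk
    fin_cases j <;> fin_cases k
    · exact absurd (by decide) hk
    · show X.δ 0 η₂ = X.δ 1 η₀
      rw [hη₂.2.1, hη₀.1]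
    · show X.δ 0 (X.σ 0 (X.σ 0 (X.δ 1 x))) = X.δ 2 η₀
      rw [ds_self X 0 0 (by decide), hη₀.2.2, src_eq hη₂]
    · exact absurd (by decide) hj
    · exact absurd (by decide) hj
    · exact absurd (by decide) hj
    · exact absurd hjk (by decide)
    · exact absurd hjk (by decide)
    · show X.δ 2 (X.σ 0 (X.σ 0 (X.δ 1 x))) = X.δ 2 η₂
      rw [ds_gt X 1 0 2 0 (by decide) (by decide) (by decide),
        ds_succ X 1 0 (by decide), hη₂.2.2]
  obtain ⟨z, hz⟩ := fill Y hcmp hK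
  exact ⟨z, hz 0 (by decide), hz 2 (by decide), hz 3 (by decide)⟩

lemma compose_unique (hK : X.KanCondUnique 3 1) {θ θ' : X _⦋3⦌}
    (e0 : X.δ 0 θ = X.δ 0 θ') (e2 : X.δ 2 θ = X.δ 2 θ') (e3 : X.δ 3 θ = X.δ 3 θ') :
    θ = θ' := by
  refine unique_of_faces (i := (1 : Fin 4)) hK ?_
  intro j hj
  fin_cases j
  · exact e0
  · exact absurd rfl hj
  · exact e2
  · exact e3

lemma units {x y : X _⦋1⦌} {f : X _⦋2⦌} (hf : X.IsBigonFrom x y f) :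
    X.IsBigonComp (X.σ 0 x) f f ∧ X.IsBigonComp f (X.σ 0 y) f := by
  constructor
  · refine ⟨X.σ 0 f, ds_self X 0 0 (by decide) f, ?_, ?_, ds_succ X 1 0 (by decide) f⟩
    · rw [ds_gt X 1 0 2 0 (by decide) (by decide) (by decide), hf.1]
    · rw [ds_gt X 2 0 3 0 (by decide) (by decide) (by decide), hf.2.2,
        ds_succ X 1 0 (by decide)]
  · refine ⟨X.σ 1 f, ?_, ds_succ X 2 1 (by decide) f, ?_, ds_self X 1 1 (by decide) f⟩
    · rw [ds_le X 0 0 0 1 (by decide) (by decide) (by decide), hf.2.1]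
    · rw [ds_gt X 2 1 3 1 (by decide) (by decide) (by decide), hf.2.2, hf.1,
        ← ss X 0 0 0 1 (by decide) (by decide) (by decide)]

lemma assoc_lemma (hK4 : X.KanCond 4 1) (hK3 : X.KanCondUnique 3 1)
    {x y z w : X _⦋1⦌} {f g h p q r s : X _⦋2⦌}
    (hf : X.IsBigonFrom x y f) (hg : X.IsBigonFrom y z g) (hh : X.IsBigonFrom z w h)
    (hp : X.IsBigonComp f g p) (hq : X.IsBigonComp g h q)
    (hr : X.IsBigonComp p h r) (hs : X.IsBigonComp f q s) : r = s := by
  obtain ⟨θp, p0, p2, p3, p1⟩ := hp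
  obtain ⟨θq, q0, q2, q3, q1⟩ := hq
  obtain ⟨θr, r0, r2, r3, r1⟩ := hr
  obtain ⟨θs, s0', s2, s3, s1⟩ := hs
  have hvy : X.δ 1 y = X.δ 1 x := src_eq hf
  have hfx : X.δ 1 f = x := hf.1
  have hgy : X.δ 1 g = y := hg.1
  -- δ1 p = x
  have hpx : X.δ 1 p = x := by
    rw [← p1, ← dd X 1 1 2 1 (by decide) (by decide) (by decide) θp, p2, hfx]
  set Y : ∀ j : Fin 5, j ≠ (1 : Fin 5) → X _⦋3⦌ :=
    fun j _ => ![θq, θq, θs, θp, X.σ 0 (X.σ 0 (X.σ 0 (X.δ 1 x)))] j with hY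
  have hcmp : Cmp (i := (1 : Fin 5)) Y := by
    intro j k hjk hj hk
    fin_cases j <;> fin_cases k
    · exact absurd (by decide) hk
    · show X.δ 0 θs = X.δ 1 θq
      rw [s0', q1]
    · show X.δ 0 θp = X.δ 2 θq
      rw [p0, q2]
    · show X.δ 0 (X.σ 0 (X.σ 0 (X.σ 0 (X.δ 1 x)))) = X.δ 3 θq
      rw [ds_self X 0 0 (by decide), q3, hgy, hvy]
    · exact absurd (by decide) hj
    · exact absurd (by decide) hj
    · exact absurd (by decide) hj
    · exact absurd (by decide) hj
    · exact absurd hjk (by decide)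
    · exact absurd hjk (by decide)
    · show X.δ 2 θp = X.δ 2 θs
      rw [p2, s2]
    · show X.δ 2 (X.σ 0 (X.σ 0 (X.σ 0 (X.δ 1 x)))) = X.δ 3 θs
      rw [ds_gt X 1 0 2 0 (by decide) (by decide) (by decide),
        ds_succ X 1 0 (by decide), s3, hfx]
    · exact absurd hjk (by decide)
    · exact absurd hjk (by decide)
    · exact absurd hjk (by decide)
    · show X.δ 3 (X.σ 0 (X.σ 0 (X.σ 0 (X.δ 1 x)))) = X.δ 3 θp
      rw [ds_gt X 2 0 3 0 (by decide) (by decide) (by decide),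
        ds_gt X 1 0 2 0 (by decide) (by decide) (by decide),
        ds_succ X 1 0 (by decide), p3, hfx]
  obtain ⟨Θ, hΘ⟩ := fill Y hcmp hK4
  have e0 : X.δ 0 Θ = θq := hΘ 0 (by decide)
  have e2 : X.δ 2 Θ = θs := hΘ 2 (by decide)
  have e3 : X.δ 3 Θ = θp := hΘ 3 (by decide)
  have e4 : X.δ 4 Θ = X.σ 0 (X.σ 0 (X.σ 0 (X.δ 1 x))) := hΘ 4 (by decide)
  set T := X.δ 1 Θ with hT
  have T0 : X.δ 0 T = h := by
    rw [hT, dd X 0 0 1 0 (by decide) (by decide) (by decide) Θ, e0, q0]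
  have T1 : X.δ 1 T = s := by
    rw [hT, ← dd X 1 1 2 1 (by decide) (by decide) (by decide) Θ, e2, s1]
  have T2 : X.δ 2 T = p := by
    rw [hT, ← dd X 1 2 3 1 (by decide) (by decide) (by decide) Θ, e3, p1]
  have T3 : X.δ 3 T = X.σ 0 (X.σ 0 (X.δ 1 x)) := by
    rw [hT, ← dd X 1 3 4 1 (by decide) (by decide) (by decide) Θ, e4,
      ds_succ X 1 0 (by decide)]
  have : T = θr := by
    refine compose_unique hK3 ?_ ?_ ?_
    · rw [T0, r0]
    · rw [T2, r2]
    · rw [T3, r3, hpx]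
  rw [← r1, ← this, T1]

lemma inv_lemma (hK : X.KanCond 3 0) {x y : X _⦋1⦌} {f : X _⦋2⦌}
    (hf : X.IsBigonFrom x y f) :
    ∃ g : X _⦋2⦌, X.IsBigonFrom y x g ∧ X.IsBigonComp f g (X.σ 0 x) := by
  set Y : ∀ j : Fin 4, j ≠ (0 : Fin 4) → X _⦋2⦌ :=
    fun j _ => ![f, X.σ 0 x, f, X.σ 0 (X.σ 0 (X.δ 1 x))] j with hY
  have hcmp : Cmp (i := (0 : Fin 4)) Y := by
    intro j k hjk hj hk
    fin_cases j <;> fin_cases k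
    · exact absurd rfl hj
    · exact absurd rfl hj
    · exact absurd rfl hj
    · exact absurd hjk (by decide)
    · show X.δ 1 f = X.δ 1 (X.σ 0 x)
      rw [hf.1, ds_succ X 1 0 (by decide)]
    · show X.δ 1 (X.σ 0 (X.σ 0 (X.δ 1 x))) = X.δ 2 (X.σ 0 x)
      rw [ds_succ X 1 0 (by decide), ds_gt X 1 0 2 0 (by decide) (by decide) (by decide)]
    · exact absurd hjk (by decide)
    · exact absurd hjk (by decide)
    · show X.δ 2 (X.σ 0 (X.σ 0 (X.δ 1 x))) = X.δ 2 f
      rw [ds_gt X 1 0 2 0 (by decide) (by decide) (by decide),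
        ds_succ X 1 0 (by decide), hf.2.2]
  obtain ⟨θ, hθ⟩ := fill Y hcmp hK
  have e1 : X.δ 1 θ = X.σ 0 x := hθ 1 (by decide)
  have e2 : X.δ 2 θ = f := hθ 2 (by decide)
  have e3 : X.δ 3 θ = X.σ 0 (X.σ 0 (X.δ 1 x)) := hθ 3 (by decide)
  refine ⟨X.δ 0 θ, ⟨?_, ?_, ?_⟩, θ, rfl, e2, ?_, e1⟩
  · rw [← dd X 0 1 2 0 (by decide) (by decide) (by decide) θ, e2, hf.2.1]
  · rw [← dd X 0 0 1 0 (by decide) (by decide) (by decide) θ, e1,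
      ds_self X 0 0 (by decide)]
  · rw [← dd X 0 2 3 0 (by decide) (by decide) (by decide) θ, e3,
      ds_self X 0 0 (by decide), src_eq hf]
  · rw [e3, hf.1]

end BigonAux

/-- In a 2-groupoid `X`, the bigons form a groupoid with set of objects `X₁`:
the 3-simplex `θ` computing a composite exists and is unique, `d₁ θ` is again a
morphism between the appropriate 1-simplices, the composition is associative,
the degenerate 2-simplex `s₀ x` is a two-sided unit, and every bigon has a
two-sided inverse. -/
theorem bigons_form_groupoid (X : SSet.{u})
    (h₁ : ∀ (m : ℕ), 1 ≤ m → ∀ j : Fin (m + 1), X.KanCond m j)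
    (h₂ : ∀ (m : ℕ), 3 ≤ m → ∀ j : Fin (m + 1), X.KanCondUnique m j) :
    -- existence and uniqueness of the composing 3-simplex, and closure of composition
    (∀ (x x' x'' : X _⦋1⦌) (η₂ η₀ : X _⦋2⦌),
      X.IsBigonFrom x x' η₂ → X.IsBigonFrom x' x'' η₀ →
      (∃! θ : X _⦋3⦌, X.δ 0 θ = η₀ ∧ X.δ 2 θ = η₂ ∧
        X.δ 3 θ = X.σ 0 (X.σ 0 (X.δ 1 x))) ∧
      (∀ θ : X _⦋3⦌, X.δ 0 θ = η₀ → X.δ 2 θ = η₂ →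
        X.δ 3 θ = X.σ 0 (X.σ 0 (X.δ 1 x)) → X.IsBigonFrom x x'' (X.δ 1 θ))) ∧
    -- the identity at `x` is a bigon from `x` to `x`
    (∀ x : X _⦋1⦌, X.IsBigonFrom x x (X.σ 0 x)) ∧
    -- associativity
    (∀ (x y z w : X _⦋1⦌) (f g h p q r s : X _⦋2⦌),
      X.IsBigonFrom x y f → X.IsBigonFrom y z g → X.IsBigonFrom z w h →
      X.IsBigonComp f g p → X.IsBigonComp g h q →
      X.IsBigonComp p h r → X.IsBigonComp f q s → r = s) ∧
    -- `s₀ x` is a two-sided unit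
    (∀ (x y : X _⦋1⦌) (f : X _⦋2⦌), X.IsBigonFrom x y f →
      X.IsBigonComp (X.σ 0 x) f f ∧ X.IsBigonComp f (X.σ 0 y) f) ∧
    -- every bigon has a two-sided inverse
    (∀ (x y : X _⦋1⦌) (f : X _⦋2⦌), X.IsBigonFrom x y f →
      ∃ g : X _⦋2⦌, X.IsBigonFrom y x g ∧
        X.IsBigonComp f g (X.σ 0 x) ∧ X.IsBigonComp g f (X.σ 0 y)) := by
  have hK31 : X.KanCond 3 1 := h₁ 3 (by norm_num) 1
  have hK30 : X.KanCond 3 0 := h₁ 3 (by norm_num) 0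
  have hK41 : X.KanCond 4 1 := h₁ 4 (by norm_num) 1
  have hKU31 : X.KanCondUnique 3 1 := h₂ 3 le_rfl 1
  refine ⟨?_, ?_, ?_, ?_, ?_⟩
  · intro x x' x'' η₂ η₀ hη₂ hη₀
    constructor
    · obtain ⟨θ, t0, t2, t3⟩ := BigonAux.compose_exists hK31 hη₂ hη₀
      exact ⟨θ, ⟨t0, t2, t3⟩, fun θ' h' =>
        BigonAux.compose_unique hKU31 (h'.1.trans t0.symm) (h'.2.1.trans t2.symm)
          (h'.2.2.trans t3.symm)⟩
    · intro θ t0 t2 t3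
      exact BigonAux.closure hη₂ hη₀ θ t0 t2 t3
  · intro x
    exact ⟨BigonAux.ds_succ X 1 0 (by decide) x, BigonAux.ds_self X 0 0 (by decide) x,
      BigonAux.ds_gt X 1 0 2 0 (by decide) (by decide) (by decide) x⟩
  · intro x y z w f g h p q r s hf hg hh hp hq hr hs
    exact BigonAux.assoc_lemma hK41 hKU31 hf hg hh hp hq hr hs
  · intro x y f hf
    exact BigonAux.units hf
  · intro x y f hf
    obtain ⟨g, hg, hfg⟩ := BigonAux.inv_lemma hK30 hf
    obtain ⟨k, hk, hgk⟩ := BigonAux.inv_lemma hK30 hg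
    have hkf : k = f := BigonAux.assoc_lemma hK41 hKU31 hf hg hk hfg hgk
      (BigonAux.units hk).1 (BigonAux.units hf).2
    exact ⟨g, hg, hfg, hkf ▸ hgk⟩
end

section
/- Let X be a simplicial set satisfying Kan(m,j) for all m ≥ 1 and 0 ≤ j ≤ m, and Kan!(m,j) for all m ≥ 3 and 0 ≤ j ≤ m (a 2-groupoid). For any η₀, η₁ ∈ X₂ with d₀η₀ = d₀η₁ and d₂η₀ = d₂η₁, there exists a unique γ ∈ X₂ such that some 3-simplex θ ∈ X₃ satisfies d₀θ = η₀, d₁θ = η₁, d₂θ = γ and d₃θ = s₀(d₂η₀). Moreover this γ is a bigon (its d₂-face is degenerate). (This expresses that the right action of the groupoid of bigons on X₂ is free and transitive along the fibres of d₂ × d₀ : X₂ → X₁ × X₁.) -/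
open CategoryTheory Simplicial SimplexCategory

universe u
namespace BigonAux
variable {X : SSet.{u}}

lemma welldef_s7 {m : ℕ} (f : ⦋m⦌ ⟶ ⦋3⦌)
    (j j' : Fin 3) (h : j ≤ j')
    (hj : ∀ k, f.toOrderHom k ≠ j.castSucc) (hj' : ∀ k, f.toOrderHom k ≠ j'.succ)
    (x x' : X _⦋2⦌) (hc : X.δ j x' = X.δ j' x) :
    X.map (factor_δ f j.castSucc).op x = X.map (factor_δ f j'.succ).op x' := by
  have hA : factor_δ f j'.succ ≫ SimplexCategory.δ j'.succ = f := factor_δ_spec f _ hj'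
  have hAmiss : ∀ k, (factor_δ f j'.succ).toOrderHom k ≠ j := by
    intro k hk
    apply hj k
    have h1 := congrArg (fun g => Hom.toOrderHom g k) hA
    simp only [comp_toOrderHom, OrderHom.comp_coe, Function.comp_apply, hk] at h1
    rw [← h1]
    show Fin.succAbove _ j = _
    rw [Fin.succAbove_of_castSucc_lt _ _ (by simpa [Fin.castSucc_lt_succ_iff] using h)]
  have hC : factor_δ f j.castSucc ≫ SimplexCategory.δ j.castSucc = f := factor_δ_spec f _ hj
  have hCmiss : ∀ k, (factor_δ f j.castSucc).toOrderHom k ≠ j' := by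
    intro k hk
    apply hj' k
    have h1 := congrArg (fun g => Hom.toOrderHom g k) hC
    simp only [comp_toOrderHom, OrderHom.comp_coe, Function.comp_apply, hk] at h1
    rw [← h1]
    show Fin.succAbove _ j' = _
    rw [Fin.succAbove_of_le_castSucc _ _ (by simpa [Fin.castSucc_le_castSucc_iff] using h)]
  have hB : factor_δ (factor_δ f j'.succ) j ≫ SimplexCategory.δ j = factor_δ f j'.succ :=
    factor_δ_spec _ _ hAmiss
  have hD : factor_δ (factor_δ f j.castSucc) j' ≫ SimplexCategory.δ j' = factor_δ f j.castSucc :=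
    factor_δ_spec _ _ hCmiss
  have key : factor_δ (factor_δ f j'.succ) j = factor_δ (factor_δ f j.castSucc) j' := by
    have h1 : factor_δ (factor_δ f j'.succ) j ≫
        (SimplexCategory.δ j ≫ SimplexCategory.δ j'.succ) = f := by
      rw [← Category.assoc, hB, hA]
    have h2 : factor_δ (factor_δ f j.castSucc) j' ≫
        (SimplexCategory.δ j ≫ SimplexCategory.δ j'.succ) = f := by
      rw [SimplexCategory.δ_comp_δ h, ← Category.assoc, hD, hC]
    rw [← cancel_mono (SimplexCategory.δ j ≫ SimplexCategory.δ j'.succ), h1, h2]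
  calc X.map (factor_δ f j.castSucc).op x
      = X.map (factor_δ (factor_δ f j.castSucc) j' ≫ SimplexCategory.δ j').op x := by rw [hD]
    _ = X.map (factor_δ (factor_δ f j.castSucc) j').op (X.δ j' x) := by
        rw [op_comp, X.map_comp]; rfl
    _ = X.map (factor_δ (factor_δ f j'.succ) j).op (X.δ j x') := by rw [key, hc]
    _ = X.map (factor_δ (factor_δ f j'.succ) j ≫ SimplexCategory.δ j).op x' := by
        rw [op_comp, X.map_comp]; rfl
    _ = X.map (factor_δ f j'.succ).op x' := by rw [hB]

/-- The underlying morphism in `SimplexCategory` of a simplex of the horn. -/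
def toHom {m : SimplexCategoryᵒᵖ} (α : (Λ[3, 2] : SSet).obj m) :
    ⦋m.unop.len⦌ ⟶ ⦋3⦌ :=
  SSet.stdSimplex.objEquiv α.1

/-- selection of candidate faces -/
def xsel (x₀ x₁ x₃ : X _⦋2⦌) (j : Fin 4) : X _⦋2⦌ :=
  if j = 0 then x₀ else if j = 1 then x₁ else x₃

variable (x₀ x₁ x₃ : X _⦋2⦌)

/-- The app component of the horn map. -/
noncomputable def hmApp (m : SimplexCategoryᵒᵖ) (α : (Λ[3, 2] : SSet).obj m) : X.obj m :=
  if ∀ k, (toHom α).toOrderHom k ≠ 0 then X.map (factor_δ (toHom α) 0).op x₀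
  else if ∀ k, (toHom α).toOrderHom k ≠ 1 then X.map (factor_δ (toHom α) 1).op x₁
  else X.map (factor_δ (toHom α) 3).op x₃

variable (c01 : X.δ 0 x₁ = X.δ 0 x₀) (c03 : X.δ 0 x₃ = X.δ 2 x₀) (c13 : X.δ 1 x₃ = X.δ 2 x₁)

include c01 c03 c13 in
lemma hmApp_eq {m : SimplexCategoryᵒᵖ} (α : (Λ[3, 2] : SSet).obj m) (j : Fin 4) (hj2 : j ≠ 2)
    (hmiss : ∀ k, (toHom α).toOrderHom k ≠ j) :
    hmApp x₀ x₁ x₃ m α = X.map (factor_δ (toHom α) j).op (xsel x₀ x₁ x₃ j) := by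
  have w01 : (∀ k, (toHom α).toOrderHom k ≠ 0) → (∀ k, (toHom α).toOrderHom k ≠ 1) →
      X.map (factor_δ (toHom α) 0).op x₀ = X.map (factor_δ (toHom α) 1).op x₁ := by
    intro h0 h1
    simpa using welldef_s7 (toHom α) 0 0 (le_refl _) (by simpa using h0) (by simpa using h1) x₀ x₁ c01
  have w03 : (∀ k, (toHom α).toOrderHom k ≠ 0) → (∀ k, (toHom α).toOrderHom k ≠ 3) →
      X.map (factor_δ (toHom α) 0).op x₀ = X.map (factor_δ (toHom α) 3).op x₃ := by
    intro h0 h3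
    simpa using welldef_s7 (toHom α) 0 2 (by decide) (by simpa using h0) (by simpa using h3) x₀ x₃ c03
  have w13 : (∀ k, (toHom α).toOrderHom k ≠ 1) → (∀ k, (toHom α).toOrderHom k ≠ 3) →
      X.map (factor_δ (toHom α) 1).op x₁ = X.map (factor_δ (toHom α) 3).op x₃ := by
    intro h1 h3
    simpa using welldef_s7 (toHom α) 1 2 (by decide) (by simpa using h1) (by simpa using h3) x₁ x₃ c13
  rcases (by decide : ∀ i : Fin 4, i ≠ 2 → i = 0 ∨ i = 1 ∨ i = 3) j hj2 with rfl | rfl | rfl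
  · rw [hmApp, if_pos hmiss]
    rfl
  · rw [hmApp]
    split_ifs with h0
    · exact (w01 h0 hmiss).trans (by rfl)
    · rfl
  · rw [hmApp]
    split_ifs with h0 h1
    · exact (w03 h0 hmiss).trans (by rfl)
    · exact (w13 h1 hmiss).trans (by rfl)
    · rfl

include c01 c03 c13 in
/-- The horn map `Λ[3,2] ⟶ X` determined by three compatible faces. -/
noncomputable def hornMap : (Λ[3, 2] : SSet) ⟶ X where
  app m := TypeCat.ofHom (fun α => hmApp x₀ x₁ x₃ m α)
  naturality m₁ m₂ u := by
    ext α
    obtain ⟨j, hj2, hmiss⟩ : ∃ j, ¬j = (2 : Fin 4) ∧ ∀ k, (toHom α).toOrderHom k ≠ j := by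
      have hα := α.2
      simp [SSet.mem_horn_iff, ← Set.univ_subset_iff, Set.subset_def, SSet.stdSimplex.asOrderHom, not_or, toHom,
        SSet.stdSimplex.objEquiv, Equiv.ulift] at hα
      exact hα
    have hmiss' : ∀ k, (toHom ((Λ[3, 2] : SSet).map u α)).toOrderHom k ≠ j := by
      intro k
      exact hmiss _
    show hmApp x₀ x₁ x₃ m₂ ((Λ[3, 2] : SSet).map u α) = X.map u (hmApp x₀ x₁ x₃ m₁ α)
    rw [hmApp_eq x₀ x₁ x₃ c01 c03 c13 _ j hj2 hmiss,
        hmApp_eq x₀ x₁ x₃ c01 c03 c13 _ j hj2 hmiss']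
    have e1 : (factor_δ (toHom ((Λ[3, 2] : SSet).map u α)) j).op = (factor_δ (toHom α) j).op ≫ u := rfl
    rw [e1, X.map_comp]
    rfl

/-- The map `Δ[3] ⟶ X` classified by a 3-simplex. -/
def simplexMap (θ : X _⦋3⦌) : Δ[3] ⟶ X where
  app m := TypeCat.ofHom (fun x => X.map ((SSet.stdSimplex.objEquiv x).op) θ)
  naturality m₁ m₂ u := by
    ext x
    have e1 : ((SSet.stdSimplex.objEquiv (n := ⦋3⦌) (m := m₂) (Δ[3].map u x)).op : _ ⟶ m₂)
        = (SSet.stdSimplex.objEquiv (n := ⦋3⦌) (m := m₁) x).op ≫ u := rfl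
    show X.map ((SSet.stdSimplex.objEquiv (Δ[3].map u x)).op) θ = _
    rw [e1, X.map_comp]
    rfl

lemma simplexMap_id (θ : X _⦋3⦌) :
    (simplexMap θ).app (Opposite.op ⦋3⦌) (SSet.yonedaEquiv (𝟙 Δ[3])) = θ := by
  show X.map ((𝟙 ⦋3⦌).op) θ = θ
  rw [op_id, X.map_id]
  rfl

lemma comp_face (σ : Δ[3] ⟶ X) (j : Fin 4) (hj : j ≠ 2) :
    (Λ[3, 2].ι ≫ σ).app (Opposite.op ⦋2⦌) (SSet.horn.face 2 j hj) =
      X.δ j (σ.app (Opposite.op ⦋3⦌) (SSet.yonedaEquiv (𝟙 Δ[3]))) := by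
  have h2 : (SSet.horn.face 2 j hj).1
      = Δ[3].map (SimplexCategory.δ j).op (SSet.yonedaEquiv (𝟙 Δ[3])) := by
    apply SSet.stdSimplex.objEquiv.injective
    rw [SSet.stdSimplex.map_apply]
    exact (Category.comp_id _).symm
  show σ.app _ (SSet.horn.face 2 j hj).1 = _
  rw [h2]
  exact ConcreteCategory.congr_hom (σ.naturality (SimplexCategory.δ j).op) (SSet.yonedaEquiv (𝟙 Δ[3]))

lemma factor_δ_self (j : Fin 4) : factor_δ (SimplexCategory.δ j) j = 𝟙 ⦋2⦌ := by
  rw [← cancel_mono (SimplexCategory.δ j), Category.id_comp]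
  exact factor_δ_spec (SimplexCategory.δ j) j (fun k => Fin.succAbove_ne j k)

include c01 c03 c13 in
lemma hornMap_face (j : Fin 4) (hj : j ≠ 2) :
    (hornMap x₀ x₁ x₃ c01 c03 c13).app (Opposite.op ⦋2⦌) (SSet.horn.face 2 j hj)
      = xsel x₀ x₁ x₃ j := by
  have hmiss : ∀ k, (toHom (SSet.horn.face 2 j hj)).toOrderHom k ≠ j :=
    fun k => Fin.succAbove_ne j k
  show hmApp x₀ x₁ x₃ _ _ = _
  rw [hmApp_eq x₀ x₁ x₃ c01 c03 c13 _ j hj hmiss]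
  have e : toHom (SSet.horn.face 2 j hj) = SimplexCategory.δ j := rfl
  rw [e, factor_δ_self]
  simp



end BigonAux


open CategoryTheory Simplicial

/-- In a 2-groupoid `X`, for any two 2-simplices `η₀, η₁` with the same `d₀`- and
`d₂`-faces there is a unique `γ ∈ X₂` such that some 3-simplex `θ` has faces
`d₀ θ = η₀`, `d₁ θ = η₁`, `d₂ θ = γ` and `d₃ θ = s₀ (d₂ η₀)`; moreover any such `γ`
is a bigon (its `d₂`-face is degenerate).  This expresses that the right action of
the groupoid of bigons on `X₂` is free and transitive along the fibres of
`d₂ × d₀ : X₂ → X₁ × X₁`. -/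
theorem bigon_action_free_transitive (X : SSet.{u})
    (h₁ : ∀ (m : ℕ), 1 ≤ m → ∀ j : Fin (m + 1), X.KanCond m j)
    (h₂ : ∀ (m : ℕ), 3 ≤ m → ∀ j : Fin (m + 1), X.KanCondUnique m j)
    (η₀ η₁ : X _⦋2⦌)
    (e₀ : X.δ 0 η₀ = X.δ 0 η₁)
    (e₂ : X.δ 2 η₀ = X.δ 2 η₁) :
    (∃! γ : X _⦋2⦌, ∃ θ : X _⦋3⦌,
      X.δ 0 θ = η₀ ∧ X.δ 1 θ = η₁ ∧ X.δ 2 θ = γ ∧ X.δ 3 θ = X.σ 0 (X.δ 2 η₀)) ∧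
    (∀ γ : X _⦋2⦌, (∃ θ : X _⦋3⦌,
      X.δ 0 θ = η₀ ∧ X.δ 1 θ = η₁ ∧ X.δ 2 θ = γ ∧ X.δ 3 θ = X.σ 0 (X.δ 2 η₀)) →
      ∃ v : X _⦋0⦌, X.δ 2 γ = X.σ 0 v) := by
  have c01 : X.δ 0 η₁ = X.δ 0 η₀ := e₀.symm
  have c03 : X.δ 0 (X.σ 0 (X.δ 2 η₀)) = X.δ 2 η₀ := by
    simpa using ConcreteCategory.congr_hom (X.δ_comp_σ_self (i := (0 : Fin 2))) (X.δ 2 η₀)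
  have c13 : X.δ 1 (X.σ 0 (X.δ 2 η₀)) = X.δ 2 η₁ := by
    rw [← e₂]
    simpa using ConcreteCategory.congr_hom (X.δ_comp_σ_succ (i := (0 : Fin 2))) (X.δ 2 η₀)
  obtain ⟨σ, hσ⟩ := h₁ 3 (by norm_num) 2 (BigonAux.hornMap η₀ η₁ (X.σ 0 (X.δ 2 η₀)) c01 c03 c13)
  set θ := σ.app (Opposite.op ⦋3⦌) (SSet.yonedaEquiv (𝟙 Δ[3])) with hθdef
  have faces : ∀ (j : Fin 4) (hj : j ≠ 2),
      X.δ j θ = BigonAux.xsel η₀ η₁ (X.σ 0 (X.δ 2 η₀)) j := by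
    intro j hj
    rw [← BigonAux.comp_face σ j hj, ← hσ]
    exact BigonAux.hornMap_face η₀ η₁ _ c01 c03 c13 j hj
  have hθ0 : X.δ 0 θ = η₀ := faces 0 (by decide)
  have hθ1 : X.δ 1 θ = η₁ := faces 1 (by decide)
  have hθ3 : X.δ 3 θ = X.σ 0 (X.δ 2 η₀) := faces 3 (by decide)
  obtain ⟨σu, -, huniq⟩ := h₂ 3 (le_refl 3) 2 (BigonAux.hornMap η₀ η₁ (X.σ 0 (X.δ 2 η₀)) c01 c03 c13)
  have key : ∀ θ' : X _⦋3⦌, X.δ 0 θ' = η₀ → X.δ 1 θ' = η₁ →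
      X.δ 3 θ' = X.σ 0 (X.δ 2 η₀) → BigonAux.simplexMap θ' = σu := by
    intro θ' k0 k1 k3
    apply huniq
    apply SSet.horn.hom_ext
    intro j hj
    have l := BigonAux.hornMap_face η₀ η₁ (X.σ 0 (X.δ 2 η₀)) c01 c03 c13 j hj
    have r := BigonAux.comp_face (BigonAux.simplexMap θ') j hj
    rw [BigonAux.simplexMap_id] at r
    rw [l, r]
    rcases (by decide : ∀ i : Fin 4, i ≠ 2 → i = 0 ∨ i = 1 ∨ i = 3) j hj with rfl | rfl | rfl
    · exact k0.symm
    · exact k1.symm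
    · exact k3.symm
  constructor
  · refine ⟨X.δ 2 θ, ⟨θ, hθ0, hθ1, rfl, hθ3⟩, ?_⟩
    rintro γ' ⟨θ', k0, k1, k2, k3⟩
    have hee : θ' = θ := by
      have h12 : BigonAux.simplexMap θ' = BigonAux.simplexMap θ :=
        (key θ' k0 k1 k3).trans (key θ hθ0 hθ1 hθ3).symm
      calc θ' = (BigonAux.simplexMap θ').app _ (SSet.yonedaEquiv (𝟙 Δ[3])) :=
            (BigonAux.simplexMap_id θ').symm
        _ = (BigonAux.simplexMap θ).app _ (SSet.yonedaEquiv (𝟙 Δ[3])) := by rw [h12]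
        _ = θ := BigonAux.simplexMap_id θ
    rw [← k2, hee]
  · rintro γ ⟨θ', -, -, k2, k3⟩
    refine ⟨X.δ 1 (X.δ 2 η₀), ?_⟩
    have i1 : X.δ 2 (X.δ 3 θ') = X.δ 2 (X.δ 2 θ') := by
      have := ConcreteCategory.congr_hom (X.δ_comp_δ (i := (2 : Fin 3)) (j := 2) le_rfl) θ'
      simpa using this
    have i2 : X.δ 2 (X.σ 0 (X.δ 2 η₀)) = X.σ 0 (X.δ 1 (X.δ 2 η₀)) := by
      have := ConcreteCategory.congr_hom (X.δ_comp_σ_of_gt (i := (1 : Fin 2)) (j := 0) (by decide)) (X.δ 2 η₀)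
      simpa using this
    rw [← k2, ← i1, k3, i2]
end

section
/- Let f : Z → X be a map of simplicial sets such that for every m ≥ 0 the natural map Z_m → hom(∂Δ[m], Z) ×_{hom(∂Δ[m], X)} X_m is surjective. Then for every n ≥ 0 and every n-simplex σ of X there exists a map u : ∂Δ[n] → Z such that f ∘ u equals the restriction of σ to ∂Δ[n]; equivalently, the projection hom(∂Δ[n], Z) ×_{hom(∂Δ[n], X)} X_n → X_n is surjective for every n ≥ 0. -/
open CategoryTheory Simplicial Opposite

/-- The restriction of an `n`-simplex `σ` of `Z` to the boundary `∂Δ[n]`, i.e. the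
composite of the boundary inclusion with the map `Δ[n] ⟶ Z` corresponding to `σ`
under the Yoneda correspondence. -/
def SSet.bdryRes {Z : SSet.{u}} (n : ℕ) (σ : Z _⦋n⦌) : (∂Δ[n] : SSet.{u}) ⟶ Z :=
  (SSet.boundary.{u} n).ι ≫ (SSet.yonedaEquiv (X := Z) (n := ⦋n⦌)).symm σ

namespace BdryLiftAux

open SimplexCategory SSet CategoryTheory.Limits

/-- The cardinality of the image of a morphism in the simplex category. -/
def imgCard {a b : SimplexCategory} (g : a ⟶ b) : ℕ :=
  (Finset.image g.toOrderHom Finset.univ).card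

lemma one_le_imgCard {a b : SimplexCategory} (g : a ⟶ b) : 1 ≤ imgCard g :=
  Finset.card_pos.mpr (Finset.univ_nonempty.image _)

lemma image_comp {a b c : SimplexCategory} (φ : a ⟶ b) (g : b ⟶ c) :
    Finset.image (φ ≫ g).toOrderHom Finset.univ
      = Finset.image g.toOrderHom (Finset.image φ.toOrderHom Finset.univ) := by
  rw [Finset.image_image]; rfl

lemma imgCard_comp_le {a b c : SimplexCategory} (φ : a ⟶ b) (g : b ⟶ c) :
    imgCard (φ ≫ g) ≤ imgCard g := by
  apply Finset.card_le_card
  rw [image_comp]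
  exact Finset.image_subset_image (Finset.subset_univ _)

lemma imgCard_comp_inj {a b c : SimplexCategory} (φ : a ⟶ b) (g : b ⟶ c)
    (hg : Function.Injective g.toOrderHom) : imgCard (φ ≫ g) = imgCard φ := by
  rw [imgCard, image_comp, Finset.card_image_of_injective _ hg]; rfl

lemma imgCard_comp_surj {a b c : SimplexCategory} (φ : a ⟶ b) (g : b ⟶ c)
    (hφ : Function.Surjective φ.toOrderHom) : imgCard (φ ≫ g) = imgCard g := by
  rw [imgCard, image_comp, Finset.image_univ_of_surjective hφ]; rfl

lemma imgCard_eq_of_surjective {a b : SimplexCategory} (g : a ⟶ b)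
    (hs : Function.Surjective g.toOrderHom) : imgCard g = b.len + 1 := by
  rw [imgCard, Finset.image_univ_of_surjective hs, Finset.card_univ, Fintype.card_fin]

lemma surjective_of_imgCard {a b : SimplexCategory} (g : a ⟶ b)
    (hc : imgCard g = b.len + 1) : Function.Surjective g.toOrderHom := by
  have huniv : Finset.image g.toOrderHom Finset.univ = Finset.univ := by
    apply Finset.eq_univ_of_card
    rw [Fintype.card_fin]
    exact hc
  intro y
  have hy : y ∈ Finset.image g.toOrderHom Finset.univ := huniv ▸ Finset.mem_univ y
  obtain ⟨x, _, hx⟩ := Finset.mem_image.mp hy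
  exact ⟨x, hx⟩

lemma imgCard_le {a b : SimplexCategory} (g : a ⟶ b) : imgCard g ≤ b.len + 1 :=
  (Finset.card_le_card (Finset.subset_univ _)).trans
    (by rw [Finset.card_univ, Fintype.card_fin])

lemma imgCard_le_of_not_surjective {a b : SimplexCategory} (g : a ⟶ b)
    (hns : ¬ Function.Surjective g.toOrderHom) : imgCard g ≤ b.len := by
  by_contra hlt
  push_neg at hlt
  exact hns (surjective_of_imgCard g (le_antisymm (imgCard_le g) hlt))

lemma not_surjective_of_imgCard_le {a b : SimplexCategory} (g : a ⟶ b)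
    (hle : imgCard g ≤ b.len) (hs : Function.Surjective g.toOrderHom) : False := by
  rw [imgCard_eq_of_surjective g hs] at hle; omega

lemma exists_fac {a : SimplexCategory} {n m : ℕ} (g : a ⟶ ⦋n⦌) (him : imgCard g = m + 1) :
    ∃ (e : a ⟶ ⦋m⦌) (i : (⦋m⦌ : SimplexCategory) ⟶ ⦋n⦌),
      Function.Surjective e.toOrderHom ∧ Function.Injective i.toOrderHom ∧ e ≫ i = g := by
  have fac : factorThruImage g ≫ image.ι g = g := image.fac g
  have hsurj : Function.Surjective (factorThruImage g).toOrderHom :=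
    epi_iff_surjective.mp inferInstance
  have hinj : Function.Injective (image.ι g).toOrderHom :=
    mono_iff_injective.mp inferInstance
  have hlen : image g = (⦋m⦌ : SimplexCategory) := by
    have h1 : imgCard (image.ι g) = m + 1 := by
      have h := imgCard_comp_surj (factorThruImage g) (image.ι g) hsurj
      rw [fac] at h
      rw [← h]
      exact him
    have h2 : imgCard (image.ι g) = (image g).len + 1 := by
      rw [imgCard, Finset.card_image_of_injective _ hinj, Finset.card_univ, Fintype.card_fin]
    ext
    have : (⦋m⦌ : SimplexCategory).len = m := rfl
    omega
  haveI : Epi (eqToHom hlen) := inferInstance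
  haveI : Mono (eqToHom hlen.symm) := inferInstance
  refine ⟨factorThruImage g ≫ eqToHom hlen, eqToHom hlen.symm ≫ image.ι g, ?_, ?_, by simp⟩
  · exact epi_iff_surjective.mp inferInstance
  · exact mono_iff_injective.mp inferInstance

lemma fac_unique {a b c : SimplexCategory} (e₁ e₂ : a ⟶ b) (i₁ i₂ : b ⟶ c)
    [Epi e₁] [Epi e₂] [Mono i₁] [Mono i₂] (w : e₁ ≫ i₁ = e₂ ≫ i₂) :
    e₁ = e₂ ∧ i₁ = i₂ := by
  have q : image (e₁ ≫ i₁) = b := image_eq (e := e₁) (i := i₁) rfl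
  have h1 : image.ι (e₁ ≫ i₁) = eqToHom q ≫ i₁ :=
    image_ι_eq (e := e₁ ≫ eqToHom q.symm) (by simp)
  have h2 : image.ι (e₁ ≫ i₁) = eqToHom q ≫ i₂ :=
    image_ι_eq (e := e₂ ≫ eqToHom q.symm) (by simp [← w])
  have hi : i₁ = i₂ := by
    have := h1.symm.trans h2
    rwa [cancel_epi (eqToHom q)] at this
  refine ⟨?_, hi⟩
  rw [hi] at w
  rwa [cancel_mono i₂] at w

lemma zcongr {α : Sort*} {P : α → Prop} {T : Sort*} (t : ∀ g, P g → T) {g g' : α}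
    (e : g = g') (hg : P g) (hg' : P g') : t g hg = t g' hg' := by subst e; rfl

lemma bdryRes_app {Z : SSet.{u}} (m : ℕ) (τ : Z _⦋m⦌) (k : SimplexCategoryᵒᵖ)
    (α : (∂Δ[m] : SSet.{u}).obj k) :
    (SSet.bdryRes m τ).app k α
      = Z.map (stdSimplex.objEquiv α.1).op τ := rfl

lemma key {Z X : SSet.{u}} (f : Z ⟶ X)
    (h : ∀ (m : ℕ) (u : (∂Δ[m] : SSet.{u}) ⟶ Z) (σ : X _⦋m⦌), u ≫ f = SSet.bdryRes m σ →
      ∃ τ : Z _⦋m⦌, SSet.bdryRes m τ = u ∧ f.app (op ⦋m⦌) τ = σ)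
    (n : ℕ) (σ : X _⦋n⦌) (m : ℕ) :
    ∃ z : ∀ (k : SimplexCategory) (g : k ⟶ ⦋n⦌), imgCard g ≤ m → Z.obj (op k),
      (∀ k g hg, f.app (op k) (z k g hg) = X.map g.op σ) ∧
      (∀ (j k : SimplexCategory) (φ : j ⟶ k) (g : k ⟶ ⦋n⦌) (g' : j ⟶ ⦋n⦌)
        (hg : imgCard g ≤ m) (hg' : imgCard g' ≤ m), g' = φ ≫ g →
        z j g' hg' = Z.map φ.op (z k g hg)) := by
  induction m with
  | zero =>
    refine ⟨fun k g hg => absurd hg (by have := one_le_imgCard g; omega), ?_, ?_⟩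
    · intro k g hg
      exact absurd hg (by have := one_le_imgCard g; omega)
    · intro j k φ g g' hg hg' _
      exact absurd hg (by have := one_le_imgCard g; omega)
  | succ m ih =>
    obtain ⟨z, hz1, hz2⟩ := ih
    have main : ∀ (ι : (⦋m⦌ : SimplexCategory) ⟶ ⦋n⦌), Function.Injective ι.toOrderHom →
        ∃ τ : Z _⦋m⦌,
          (∀ (j : SimplexCategory) (a : j ⟶ ⦋m⦌), ¬ Function.Surjective a.toOrderHom →
            ∀ (g' : j ⟶ ⦋n⦌) (hc : imgCard g' ≤ m), g' = a ≫ ι →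
              Z.map a.op τ = z j g' hc) ∧
          f.app (op ⦋m⦌) τ = X.map ι.op σ := by
      intro ι hι
      have hbd : ∀ (k : SimplexCategoryᵒᵖ) (α : (∂Δ[m] : SSet.{u}).obj k),
          imgCard (stdSimplex.objEquiv α.1 ≫ ι) ≤ m := by
        intro k α
        rw [imgCard_comp_inj _ _ hι]
        have := imgCard_le_of_not_surjective (stdSimplex.objEquiv α.1) α.2
        rwa [len_mk] at this
      let uι : (∂Δ[m] : SSet.{u}) ⟶ Z :=
        { app := fun k => TypeCat.ofHom fun α => z k.unop (stdSimplex.objEquiv α.1 ≫ ι) (hbd k α)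
          naturality := by
            intro k k' φ
            ext α
            exact hz2 k'.unop k.unop φ.unop _ _ (hbd k α) (hbd k' _)
              (by rw [← Category.assoc]; rfl) }
      have hcomm : uι ≫ f = SSet.bdryRes m (X.map ι.op σ) := by
        apply SSet.hom_ext
        intro k
        refine ConcreteCategory.hom_ext _ _ fun α => ?_
        rw [bdryRes_app]
        change f.app k (z k.unop (stdSimplex.objEquiv α.1 ≫ ι) (hbd k α)) = _
        rw [hz1]
        rw [op_comp, FunctorToTypes.map_comp_apply]
      obtain ⟨τ, hτ1, hτ2⟩ := h m uι (X.map ι.op σ) hcomm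
      refine ⟨τ, ?_, hτ2⟩
      intro j a ha g' hc hfac
      have happ := congrArg (fun t => t.app (op j)
        ⟨(stdSimplex.objEquiv).symm a, ha⟩) hτ1
      have h1 : Z.map a.op τ
          = z j ((stdSimplex.objEquiv
              ((stdSimplex.objEquiv).symm a : (Δ[m] : SSet.{u}).obj (op j))) ≫ ι)
              (hbd (op j) ⟨(stdSimplex.objEquiv).symm a, ha⟩) := happ
      rw [h1]
      exact zcongr (z j) (by simp [hfac]) _ _
    choose τ hτa hτb using main
    have fac : ∀ (k : SimplexCategory) (g : k ⟶ ⦋n⦌), imgCard g = m + 1 →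
        ∃ (e : k ⟶ ⦋m⦌) (i : (⦋m⦌ : SimplexCategory) ⟶ ⦋n⦌),
          Function.Surjective e.toOrderHom ∧ Function.Injective i.toOrderHom ∧ e ≫ i = g :=
      fun k g him => exists_fac g him
    choose efac ifac hes his hcomp using fac
    have him : ∀ (k : SimplexCategory) (g : k ⟶ ⦋n⦌),
        imgCard g ≤ m + 1 → ¬ imgCard g ≤ m → imgCard g = m + 1 :=
      fun k g hg h' => le_antisymm hg (by omega)
    refine ⟨fun k g hg =>
        if h' : imgCard g ≤ m then z k g h'
        else Z.map (efac k g (him k g hg h')).op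
          (τ (ifac k g (him k g hg h')) (his k g (him k g hg h'))), ?_, ?_⟩
    · intro k g hg
      dsimp only
      split_ifs with h'
      · exact hz1 k g h'
      · rw [FunctorToTypes.naturality, hτb, ← FunctorToTypes.map_comp_apply, ← op_comp,
          hcomp]
    · intro j k φ g g' hg hg' hfac
      dsimp only
      by_cases h1 : imgCard g ≤ m
      · have h2 : imgCard g' ≤ m := by
          rw [hfac]; exact (imgCard_comp_le φ g).trans h1
        rw [dif_pos h2, dif_pos h1]
        exact hz2 j k φ g g' h1 h2 hfac
      · rw [dif_neg h1]
        have hfac2 : (φ ≫ efac k g (him k g hg h1)) ≫ ifac k g (him k g hg h1) = g' := by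
          rw [Category.assoc, hcomp, ← hfac]
        have himg : imgCard (φ ≫ efac k g (him k g hg h1)) = imgCard g' := by
          rw [← hfac2, imgCard_comp_inj _ _ (his _ _ _)]
        rw [← FunctorToTypes.map_comp_apply, ← op_comp]
        by_cases h2 : imgCard g' ≤ m
        · rw [dif_pos h2]
          have hns : ¬ Function.Surjective (φ ≫ efac k g (him k g hg h1)).toOrderHom := by
            intro hs
            exact not_surjective_of_imgCard_le _ (by rw [himg, len_mk]; exact h2) hs
          exact (hτa _ (his _ _ _) j _ hns g' h2 hfac2.symm).symm
        · rw [dif_neg h2]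
          have hsurj : Function.Surjective (φ ≫ efac k g (him k g hg h1)).toOrderHom := by
            apply surjective_of_imgCard
            rw [himg, him j g' hg' h2, len_mk]
          haveI : Epi (efac j g' (him j g' hg' h2)) := epi_iff_surjective.mpr (hes _ _ _)
          haveI : Epi (φ ≫ efac k g (him k g hg h1)) := epi_iff_surjective.mpr hsurj
          haveI : Mono (ifac j g' (him j g' hg' h2)) := mono_iff_injective.mpr (his _ _ _)
          haveI : Mono (ifac k g (him k g hg h1)) := mono_iff_injective.mpr (his _ _ _)
          have hq := fac_unique (efac j g' (him j g' hg' h2))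
            (φ ≫ efac k g (him k g hg h1))
            (ifac j g' (him j g' hg' h2)) (ifac k g (him k g hg h1))
            (by rw [hcomp, hfac2])
          rw [hq.1, zcongr τ hq.2 (his _ _ _) (his _ _ _)]

end BdryLiftAux

/-- If for every `m ≥ 0` the natural map
`Z_m → hom(∂Δ[m], Z) ×_{hom(∂Δ[m], X)} X_m` is surjective, then for every `n` and
every `n`-simplex `σ` of `X` there is a map `u : (∂Δ[n] : SSet.{u}) ⟶ Z` with `f ∘ u` equal to
the restriction of `σ` to the boundary; i.e. the projection
`hom(∂Δ[n], Z) ×_{hom(∂Δ[n], X)} X_n → X_n` is surjective. -/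
theorem bdry_lift_surjective {Z X : SSet.{u}} (f : Z ⟶ X)
    (h : ∀ (m : ℕ) (u : (∂Δ[m] : SSet.{u}) ⟶ Z) (σ : X _⦋m⦌), u ≫ f = SSet.bdryRes m σ →
      ∃ τ : Z _⦋m⦌, SSet.bdryRes m τ = u ∧ f.app (op ⦋m⦌) τ = σ) :
    ∀ (n : ℕ) (σ : X _⦋n⦌), ∃ u : (∂Δ[n] : SSet.{u}) ⟶ Z, u ≫ f = SSet.bdryRes n σ := by
  intro n σ
  obtain ⟨z, hz1, hz2⟩ := BdryLiftAux.key f h n σ n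
  have hle : ∀ (k : SimplexCategoryᵒᵖ) (α : (∂Δ[n] : SSet.{u}).obj k),
      BdryLiftAux.imgCard (SSet.stdSimplex.objEquiv α.1) ≤ n := by
    intro k α
    have := BdryLiftAux.imgCard_le_of_not_surjective
      (SSet.stdSimplex.objEquiv α.1) α.2
    rwa [SimplexCategory.len_mk] at this
  refine ⟨{ app := fun k => TypeCat.ofHom fun α => z k.unop (SSet.stdSimplex.objEquiv α.1) (hle k α)
            naturality := by
              intro k k' φ
              ext α
              exact hz2 k'.unop k.unop φ.unop _ _ (hle k α) (hle k' _) rfl }, ?_⟩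
  apply SSet.hom_ext
  intro k
  refine ConcreteCategory.hom_ext _ _ fun α => ?_
  rw [BdryLiftAux.bdryRes_app]
  change f.app k (z k.unop (SSet.stdSimplex.objEquiv α.1) (hle k α)) = _
  rw [hz1]
end
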